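/- Let G be a finite group and W a finite-dimensional complex vector space carrying a representation of G. Then there exists a nonzero G-invariant complex subspace W' ⊆ W such that the subrepresentation W' admits a G-invariant real structure if and only if there exists a nonzero (possibly degenerate) G-invariant symmetric ℂ-bilinear form on W. -/

import Mathlib

open Module Complex

private lemma fwd_aux {G : Type*} [Group G] [Finite G]
    {W : Type*} [AddCommGroup W] [Module ℂ W] [FiniteDimensional ℂ W]
    (ρ : Representation ℂ G W)
    (hyp : ∃ W' : Submodule ℂ W, W' ≠ ⊥ ∧ (∀ (s : G), ∀ x ∈ W', ρ s x ∈ W') ∧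
      ∃ R : W → W,
        (∀ x ∈ W', R x ∈ W') ∧
        (∀ x ∈ W', ∀ y ∈ W', R (x + y) = R x + R y) ∧
        (∀ (a : ℂ), ∀ x ∈ W', R (a • x) = (starRingEnd ℂ a) • R x) ∧
        (∀ x ∈ W', R (R x) = x) ∧
        (∀ (s : G), ∀ x ∈ W', R (ρ s x) = ρ s (R x))) :
    ∃ B : LinearMap.BilinForm ℂ W, B ≠ 0 ∧
        (∀ x y : W, B x y = B y x) ∧
        (∀ (s : G) (x y : W), B (ρ s x) (ρ s y) = B x y) := by
  classical
  have _i : Fintype G := Fintype.ofFinite G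
  obtain ⟨W', hW'ne, hGinv, R, hRmem, hRadd, hRsmul, hRR, hRcomm⟩ := hyp
  obtain ⟨x₀, hx₀W, hx₀⟩ := (Submodule.ne_bot_iff W').mp hW'ne
  -- an R-fixed nonzero vector
  have hfix : ∀ y ∈ W', R (y + R y) = y + R y := fun y hy => by
    rw [hRadd y hy (R y) (hRmem y hy), hRR y hy, add_comm]
  obtain ⟨v, hvW, hv0, hvR⟩ : ∃ v, v ∈ W' ∧ v ≠ 0 ∧ R v = v := by
    by_cases hc : x₀ + R x₀ = 0
    · have hR0 : R x₀ = -x₀ := eq_neg_of_add_eq_zero_right hc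
      have hmem : Complex.I • x₀ ∈ W' := Submodule.smul_mem _ _ hx₀W
      refine ⟨Complex.I • x₀ + R (Complex.I • x₀),
        add_mem hmem (hRmem _ hmem), ?_, hfix _ hmem⟩
      rw [hRsmul Complex.I x₀ hx₀W, hR0]
      intro hzz
      apply hx₀
      have h2 : ((2 : ℂ) * Complex.I) • x₀ = 0 := by
        rw [← hzz]
        simp [Complex.conj_I]
        module
      rcases smul_eq_zero.mp h2 with h3 | h3
      · exact absurd h3 (by simp [Complex.ext_iff])
      · exact h3
    · exact ⟨x₀ + R x₀, add_mem hx₀W (hRmem _ hx₀W), hc, hfix _ hx₀W⟩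
  -- a real functional not vanishing at v
  obtain ⟨φ, hφ⟩ : ∃ φ : Module.Dual ℝ W, φ v ≠ 0 := by
    by_contra hcon
    push_neg at hcon
    exact hv0 ((Module.forall_dual_apply_eq_zero_iff ℝ v).mp hcon)
  set reX : W → W := fun x => (2⁻¹ : ℂ) • (x + R x) with hreX
  set imX : W → W := fun x => (-(Complex.I) * 2⁻¹) • (x - R x) with himX
  set f0f : W → ℂ := fun x => ((φ (reX x) : ℝ) : ℂ) + Complex.I * ((φ (imX x) : ℝ) : ℂ)
    with hf0f
  have hcoesmul : ∀ (r : ℝ) (w : W), (r : ℂ) • w = r • w := fun r w => Complex.coe_smul r w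
  have hadd : ∀ x ∈ W', ∀ y ∈ W', f0f (x + y) = f0f x + f0f y := by
    intro x hx y hy
    have h1 : reX (x + y) = reX x + reX y := by
      show (2⁻¹ : ℂ) • (x + y + R (x + y)) = _
      rw [hRadd x hx y hy]
      module
    have h2 : imX (x + y) = imX x + imX y := by
      show (-(Complex.I) * 2⁻¹) • (x + y - R (x + y)) = _
      rw [hRadd x hx y hy]
      module
    rw [hf0f]
    simp only [h1, h2, map_add]
    push_cast
    ring
  have hrsm : ∀ (r : ℝ), ∀ x ∈ W', f0f ((r : ℂ) • x) = (r : ℂ) * f0f x := by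
    intro r x hx
    have h1 : reX ((r : ℂ) • x) = r • reX x := by
      show (2⁻¹ : ℂ) • ((r : ℂ) • x + R ((r : ℂ) • x)) = _
      rw [hRsmul _ x hx, Complex.conj_ofReal, ← hcoesmul]
      module
    have h2 : imX ((r : ℂ) • x) = r • imX x := by
      show (-(Complex.I) * 2⁻¹) • ((r : ℂ) • x - R ((r : ℂ) • x)) = _
      rw [hRsmul _ x hx, Complex.conj_ofReal, ← hcoesmul]
      module
    rw [hf0f]
    simp only [h1, h2, map_smul, smul_eq_mul]
    push_cast
    ring
  have hIsm : ∀ x ∈ W', f0f (Complex.I • x) = Complex.I * f0f x := by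
    intro x hx
    have h1 : reX (Complex.I • x) = -imX x := by
      show (2⁻¹ : ℂ) • (Complex.I • x + R (Complex.I • x)) = -((-(Complex.I) * 2⁻¹) • (x - R x))
      rw [hRsmul _ x hx, Complex.conj_I]
      module
    have h2 : imX (Complex.I • x) = reX x := by
      show (-(Complex.I) * 2⁻¹) • (Complex.I • x - R (Complex.I • x)) = (2⁻¹ : ℂ) • (x + R x)
      rw [hRsmul _ x hx, Complex.conj_I]
      match_scalars
      · linear_combination (-(2⁻¹ : ℂ)) * Complex.I_sq
      · linear_combination (-(2⁻¹ : ℂ)) * Complex.I_sq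
    rw [hf0f]
    simp only [h1, h2, map_neg]
    push_cast
    linear_combination (-(((φ (imX x) : ℝ) : ℂ))) * Complex.I_sq
  have hsmul : ∀ (a : ℂ), ∀ x ∈ W', f0f (a • x) = a * f0f x := by
    intro a x hx
    have hdecomp : a • x = ((a.re : ℝ) : ℂ) • x + ((a.im : ℝ) : ℂ) • (Complex.I • x) := by
      rw [smul_smul, ← add_smul, Complex.re_add_im]
    rw [hdecomp,
      hadd _ (Submodule.smul_mem _ _ hx) _
        (Submodule.smul_mem _ _ (Submodule.smul_mem _ _ hx)),
      hrsm _ _ hx, hrsm _ _ (Submodule.smul_mem _ _ hx), hIsm _ hx]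
    conv_rhs => rw [← Complex.re_add_im a]
    ring
  -- package and extend
  set f0 : W' →ₗ[ℂ] ℂ :=
    { toFun := fun x => f0f (x : W)
      map_add' := fun x y => hadd _ x.2 _ y.2
      map_smul' := fun a x => by simpa using hsmul a _ x.2 } with hf0
  obtain ⟨f, hfext⟩ := LinearMap.exists_extend f0
  have hfW' : ∀ x (hx : x ∈ W'), f x = f0f x := by
    intro x hx
    have := DFunLike.congr_fun hfext (⟨x, hx⟩ : W')
    exact (by simpa using this : f x = f0 ⟨x, hx⟩)
  have hfv : ∀ s : G, f (ρ s v) = ((φ (ρ s v) : ℝ) : ℂ) := by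
    intro s
    have hmem := hGinv s v hvW
    have hfixs : R (ρ s v) = ρ s v := by rw [hRcomm s v hvW, hvR]
    have h1 : reX (ρ s v) = ρ s v := by
      show (2⁻¹ : ℂ) • (ρ s v + R (ρ s v)) = ρ s v
      rw [hfixs]
      module
    have h2 : imX (ρ s v) = 0 := by
      show (-(Complex.I) * 2⁻¹) • (ρ s v - R (ρ s v)) = 0
      rw [hfixs, sub_self, smul_zero]
    rw [hfW' _ hmem, hf0f]
    simp [h1, h2]
  -- the bilinear form
  set B : LinearMap.BilinForm ℂ W := LinearMap.mk₂ ℂ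
      (fun x y => ∑ s : G, f (ρ s x) * f (ρ s y))
      (fun x x' y => by
        rw [← Finset.sum_add_distrib]
        exact Finset.sum_congr rfl fun s _ => by rw [map_add (ρ s), map_add f, add_mul])
      (fun a x y => by
        rw [Finset.smul_sum]
        exact Finset.sum_congr rfl fun s _ => by
          rw [map_smul (ρ s), map_smul f, smul_eq_mul, smul_eq_mul, mul_assoc])
      (fun x y y' => by
        rw [← Finset.sum_add_distrib]
        exact Finset.sum_congr rfl fun s _ => by rw [map_add (ρ s), map_add f, mul_add])
      (fun a x y => by
        rw [Finset.smul_sum]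
        exact Finset.sum_congr rfl fun s _ => by
          rw [map_smul (ρ s), map_smul f, smul_eq_mul, smul_eq_mul]
          ring) with hB
  have hBapp : ∀ x y, B x y = ∑ s : G, f (ρ s x) * f (ρ s y) := fun x y => rfl
  refine ⟨B, ?_, ?_, ?_⟩
  · intro hB0
    have hvv : B v v = ((∑ s : G, φ (ρ s v) * φ (ρ s v) : ℝ) : ℂ) := by
      rw [hBapp]
      push_cast
      exact Finset.sum_congr rfl fun s _ => by rw [hfv s]
    have hpos : 0 < ∑ s : G, φ (ρ s v) * φ (ρ s v) := by
      refine Finset.sum_pos' (fun s _ => mul_self_nonneg _) ⟨1, Finset.mem_univ 1, ?_⟩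
      have h1 : ρ (1 : G) v = v := by rw [map_one]; rfl
      rw [h1]
      exact mul_self_pos.mpr hφ
    rw [hB0] at hvv
    simp only [LinearMap.zero_apply] at hvv
    exact (ne_of_gt hpos) (by exact_mod_cast hvv.symm)
  · intro x y
    rw [hBapp, hBapp]
    exact Finset.sum_congr rfl fun s _ => mul_comm _ _
  · intro t x y
    rw [hBapp, hBapp]
    have hcomp : ∀ (s : G) (z : W), ρ s (ρ t z) = ρ (s * t) z := by
      intro s z
      rw [map_mul]; rfl
    calc ∑ s : G, f (ρ s (ρ t x)) * f (ρ s (ρ t y))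
        = ∑ s : G, f (ρ (s * t) x) * f (ρ (s * t) y) :=
          Finset.sum_congr rfl fun s _ => by rw [hcomp, hcomp]
      _ = ∑ s : G, f (ρ s x) * f (ρ s y) :=
          Equiv.sum_comp (Equiv.mulRight t) (fun s => f (ρ s x) * f (ρ s y))


private lemma bwd_aux {G : Type*} [Group G] [Finite G]
    {W : Type*} [AddCommGroup W] [Module ℂ W] [FiniteDimensional ℂ W]
    (ρ : Representation ℂ G W)
    (hB : ∃ B : LinearMap.BilinForm ℂ W, B ≠ 0 ∧
        (∀ x y : W, B x y = B y x) ∧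
        (∀ (s : G) (x y : W), B (ρ s x) (ρ s y) = B x y)) :
    (∃ W' : Submodule ℂ W, W' ≠ ⊥ ∧ (∀ (s : G), ∀ x ∈ W', ρ s x ∈ W') ∧
      ∃ R : W → W,
        (∀ x ∈ W', R x ∈ W') ∧
        (∀ x ∈ W', ∀ y ∈ W', R (x + y) = R x + R y) ∧
        (∀ (a : ℂ), ∀ x ∈ W', R (a • x) = (starRingEnd ℂ a) • R x) ∧
        (∀ x ∈ W', R (R x) = x) ∧
        (∀ (s : G), ∀ x ∈ W', R (ρ s x) = ρ s (R x))) := by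
  classical
  have _i : Fintype G := Fintype.ofFinite G
  obtain ⟨B, hBne, hBsymm, hBinv⟩ := hB
  set bW := Module.Free.chooseBasis ℂ W with hbW
  -- the base hermitian form
  set h0 : W → W → ℂ := fun x y => ∑ i, (starRingEnd ℂ) (bW.repr x i) * (bW.repr y i) with hh0
  -- averaged hermitian form
  set h : W → W → ℂ := fun x y => ∑ s : G, h0 (ρ s x) (ρ s y) with hh
  have h0addl : ∀ x x' y, h0 (x + x') y = h0 x y + h0 x' y := by
    intro x x' y
    simp [hh0, map_add, Finsupp.add_apply, add_mul, Finset.sum_add_distrib]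
  have h0addr : ∀ x y y', h0 x (y + y') = h0 x y + h0 x y' := by
    intro x y y'
    simp [hh0, map_add, Finsupp.add_apply, mul_add, Finset.sum_add_distrib]
  have h0smull : ∀ (a : ℂ) x y, h0 (a • x) y = (starRingEnd ℂ a) * h0 x y := by
    intro a x y
    simp [hh0, map_smul, Finsupp.smul_apply, smul_eq_mul, map_mul, Finset.mul_sum, mul_assoc]
  have h0smulr : ∀ (a : ℂ) x y, h0 x (a • y) = a * h0 x y := by
    intro a x y
    simp only [hh0, map_smul, Finsupp.smul_apply, smul_eq_mul, Finset.mul_sum]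
    exact Finset.sum_congr rfl fun i _ => by ring
  have h0conj : ∀ x y, (starRingEnd ℂ) (h0 x y) = h0 y x := by
    intro x y
    simp only [hh0, map_sum, map_mul, RingHomCompTriple.comp_apply, RingHom.id_apply,
      Complex.conj_conj]
    exact Finset.sum_congr rfl fun i _ => by ring
  have h0self : ∀ x, h0 x x = ((∑ i, Complex.normSq (bW.repr x i) : ℝ) : ℂ) := by
    intro x
    rw [hh0]
    push_cast
    exact Finset.sum_congr rfl fun i _ => (Complex.normSq_eq_conj_mul_self).symm
  have h0zero : ∀ x, (∑ i, Complex.normSq (bW.repr x i)) = 0 → x = 0 := by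
    intro x hx
    have h1 : ∀ i ∈ Finset.univ, Complex.normSq (bW.repr x i) = 0 := by
      intro i _
      exact (Finset.sum_eq_zero_iff_of_nonneg
        (fun j _ => Complex.normSq_nonneg _)).mp hx i (Finset.mem_univ i)
    have h2 : bW.repr x = 0 := by
      ext i
      exact Complex.normSq_eq_zero.mp (h1 i (Finset.mem_univ i))
    simpa using bW.repr.map_eq_zero_iff.mp h2
  -- properties of h
  have haddl : ∀ x x' y, h (x + x') y = h x y + h x' y := by
    intro x x' y
    simp only [hh, map_add]
    rw [← Finset.sum_add_distrib]
    exact Finset.sum_congr rfl fun s _ => h0addl _ _ _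
  have haddr : ∀ x y y', h x (y + y') = h x y + h x y' := by
    intro x y y'
    simp only [hh, map_add]
    rw [← Finset.sum_add_distrib]
    exact Finset.sum_congr rfl fun s _ => h0addr _ _ _
  have hsmull : ∀ (a : ℂ) x y, h (a • x) y = (starRingEnd ℂ a) * h x y := by
    intro a x y
    simp only [hh, map_smul, Finset.mul_sum]
    exact Finset.sum_congr rfl fun s _ => h0smull _ _ _
  have hsmulr : ∀ (a : ℂ) x y, h x (a • y) = a * h x y := by
    intro a x y
    simp only [hh, map_smul, Finset.mul_sum]
    exact Finset.sum_congr rfl fun s _ => h0smulr _ _ _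
  have hconj : ∀ x y, (starRingEnd ℂ) (h x y) = h y x := by
    intro x y
    simp only [hh, map_sum]
    exact Finset.sum_congr rfl fun s _ => h0conj _ _
  have hinvar : ∀ (t : G) x y, h (ρ t x) (ρ t y) = h x y := by
    intro t x y
    have hcomp : ∀ (s : G) (z : W), ρ s (ρ t z) = ρ (s * t) z := by
      intro s z
      rw [map_mul]; rfl
    calc h (ρ t x) (ρ t y) = ∑ s : G, h0 (ρ (s * t) x) (ρ (s * t) y) := by
          simp only [hh]
          exact Finset.sum_congr rfl fun s _ => by rw [hcomp, hcomp]
      _ = ∑ s : G, h0 (ρ s x) (ρ s y) :=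
          Equiv.sum_comp (Equiv.mulRight t) (fun s => h0 (ρ s x) (ρ s y))
      _ = h x y := rfl
  have hrealpos : ∀ x : W, x ≠ 0 → ∃ r : ℝ, 0 < r ∧ h x x = (r : ℂ) := by
    intro x hx
    refine ⟨∑ s : G, ∑ i, Complex.normSq (bW.repr (ρ s x) i), ?_, ?_⟩
    · refine Finset.sum_pos' (fun s _ => Finset.sum_nonneg fun i _ => Complex.normSq_nonneg _)
        ⟨1, Finset.mem_univ 1, ?_⟩
      have h1 : ρ (1 : G) x = x := by rw [map_one]; rfl
      rw [h1]
      rcases lt_or_eq_of_le (Finset.sum_nonneg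
        (fun i (_ : i ∈ Finset.univ) => Complex.normSq_nonneg (bW.repr x i))) with hlt | heq
      · exact hlt
      · exact absurd (h0zero x heq.symm) hx
    · simp only [hh]
      push_cast
      exact Finset.sum_congr rfl fun s _ => by rw [h0self]; push_cast; rfl
  have hzero_l : ∀ y, h 0 y = 0 := by
    intro y
    have := hsmull 0 0 y
    simpa using this
  have hzero_r : ∀ x, h x 0 = 0 := by
    intro x
    have := hsmulr 0 x 0
    simpa using this
  have hnondeg : ∀ z, (∀ y, h z y = 0) → z = 0 := by
    intro z hz
    by_contra hzne
    obtain ⟨r, hrpos, hr⟩ := hrealpos z hzne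
    rw [hz z] at hr
    exact absurd ((Complex.ofReal_eq_zero).mp hr.symm) (ne_of_gt hrpos)
  -- the real-linear map x ↦ h x ⬝ into the complex dual
  set Φ : W →ₗ[ℝ] Module.Dual ℂ W :=
    { toFun := fun x =>
        { toFun := fun y => h x y
          map_add' := fun y y' => haddr x y y'
          map_smul' := fun a y => by simpa using hsmulr a x y }
      map_add' := fun x x' => by
        ext y
        exact haddl x x' y
      map_smul' := fun r x => by
        ext y
        have h1 : r • x = ((r : ℂ)) • x := (Complex.coe_smul r x).symm
        simp only [h1, LinearMap.coe_mk, AddHom.coe_mk, RingHom.id_apply,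
          LinearMap.smul_apply]
        rw [hsmull]
        simp [Complex.real_smul, Complex.conj_ofReal] } with hPhi
  have hPhiapp : ∀ x y, Φ x y = h x y := fun x y => rfl
  have hPhiinj : Function.Injective Φ := by
    rw [injective_iff_map_eq_zero]
    intro x hx
    apply hnondeg
    intro y
    have := congrArg (fun (ψ : Module.Dual ℂ W) => ψ y) hx
    exact (by simpa using this : Φ x y = 0)
  have hrank : Module.finrank ℝ W = Module.finrank ℝ (Module.Dual ℂ W) := by
    rw [finrank_real_of_complex, finrank_real_of_complex, Subspace.dual_finrank_eq]
  have hPhisurj : Function.Surjective Φ :=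
    (LinearMap.injective_iff_surjective_of_finrank_eq_finrank hrank).mp hPhiinj
  -- the conjugate-linear operator C with h (C x) y = B x y
  set C : W → W := fun x => Function.surjInv hPhisurj (B x) with hC
  have hCdef : ∀ x y, h (C x) y = B x y := by
    intro x y
    have := Function.surjInv_eq hPhisurj (B x)
    have := congrArg (fun (ψ : Module.Dual ℂ W) => ψ y) this
    simpa [hPhiapp] using this
  have huniq : ∀ z w : W, (∀ y, h z y = h w y) → z = w := by
    intro z w hzw
    have : ∀ y, h (z + (-1 : ℂ) • w) y = 0 := by
      intro y
      rw [haddl, hsmull]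
      simp [hzw y]
    have h2 := hnondeg _ this
    rw [neg_one_smul] at h2
    exact add_neg_eq_zero.mp h2
  -- properties of C
  have hρinv : ∀ (s : G) (z : W), ρ s (ρ s⁻¹ z) = z := by
    intro s z
    have : ρ s * ρ s⁻¹ = 1 := by rw [← map_mul, mul_inv_cancel, map_one]
    calc ρ s (ρ s⁻¹ z) = (ρ s * ρ s⁻¹) z := rfl
      _ = z := by rw [this]; rfl
  have hCadd : ∀ x y, C (x + y) = C x + C y := by
    intro x y
    refine huniq _ _ fun z => ?_
    rw [hCdef, haddl, hCdef, hCdef, map_add, LinearMap.add_apply]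
  have hCsmul : ∀ (a : ℂ) x, C (a • x) = (starRingEnd ℂ a) • C x := by
    intro a x
    refine huniq _ _ fun z => ?_
    rw [hCdef, hsmull, hCdef]
    simp [Complex.conj_conj]
  have hCequiv : ∀ (s : G) x, C (ρ s x) = ρ s (C x) := by
    intro s x
    refine huniq _ _ fun z => ?_
    rw [hCdef]
    calc B (ρ s x) z = B (ρ s x) (ρ s (ρ s⁻¹ z)) := by rw [hρinv]
      _ = B x (ρ s⁻¹ z) := hBinv s x _
      _ = h (C x) (ρ s⁻¹ z) := (hCdef x _).symm
      _ = h (ρ s (C x)) (ρ s (ρ s⁻¹ z)) := (hinvar s _ _).symm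
      _ = h (ρ s (C x)) z := by rw [hρinv]
  have hCBsym : ∀ x y, h (C x) y = h (C y) x := by
    intro x y
    rw [hCdef, hCdef, hBsymm]
  -- P = C ∘ C
  have hPB : ∀ x y, h (C (C x)) y = h (C y) (C x) := by
    intro x y
    rw [hCdef, hBsymm, ← hCdef]
  have hPselfadj : ∀ x y, h (C (C x)) y = h x (C (C y)) :=
    fun x y =>
    calc h (C (C x)) y = h (C y) (C x) := hPB x y
      _ = starRingEnd ℂ (h (C x) (C y)) := (hconj _ _).symm
      _ = starRingEnd ℂ (h (C (C y)) x) := by rw [hPB y x]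
      _ = h x (C (C y)) := hconj _ _
  have hCzero : C 0 = 0 := by
    have := hCsmul 0 0
    simpa using this
  -- C ≠ 0 somewhere
  have hCne : ∃ x, C x ≠ 0 := by
    by_contra hcon
    push_neg at hcon
    apply hBne
    ext x y
    have := hCdef x y
    rw [hcon x, hzero_l] at this
    simpa using this.symm
  -- bundled P
  set Pl : W →ₗ[ℂ] W :=
    { toFun := fun x => C (C x)
      map_add' := fun x y => by
        show C (C (x + y)) = C (C x) + C (C y)
        rw [hCadd, hCadd]
      map_smul' := fun a x => by
        show C (C (a • x)) = a • C (C x)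
        rw [hCsmul, hCsmul]
        simp [Complex.conj_conj] } with hPl
  have hPlapp : ∀ x, Pl x = C (C x) := fun x => rfl
  -- P ≠ 0 at some point
  obtain ⟨x₁, hx₁⟩ := hCne
  have hPx₁ : Pl x₁ ≠ 0 := by
    intro hP0
    obtain ⟨r, hrpos, hr⟩ := hrealpos (C x₁) hx₁
    have : h (C (C x₁)) x₁ = h (C x₁) (C x₁) := hPB x₁ x₁
    rw [hPlapp] at hP0
    rw [hP0, hzero_l, hr] at this
    exact (ne_of_gt hrpos) (by exact_mod_cast this.symm)
  -- restrict P to its range, find a nonzero eigenvalue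
  set U : Submodule ℂ W := LinearMap.range Pl with hU
  have hUmem : ∀ x ∈ U, Pl x ∈ U := fun x _ => LinearMap.mem_range_self Pl x
  haveI : Nontrivial U := by
    refine Submodule.nontrivial_iff_ne_bot.mpr ?_
    intro hbot
    exact hPx₁ (by
      have : Pl x₁ ∈ U := LinearMap.mem_range_self Pl x₁
      rw [hbot] at this
      simpa using this)
  set Pres : Module.End ℂ U := Pl.restrict hUmem with hPres
  obtain ⟨μ, hμ⟩ := Module.End.exists_eigenvalue Pres
  obtain ⟨vU, hvU⟩ := hμ.exists_hasEigenvector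
  have hvU0 : (vU : W) ≠ 0 := fun hz => hvU.2 (by ext; simpa using hz)
  have hPvU : Pl (vU : W) = μ • (vU : W) := by
    have h1 : Pres vU = μ • vU := Module.End.mem_eigenspace_iff.mp hvU.1
    have h2 := congrArg (Subtype.val) h1
    rwa [LinearMap.restrict_coe_apply] at h2
  -- μ ≠ 0
  have hμ0 : μ ≠ 0 := by
    intro hz
    obtain ⟨w, hw⟩ := vU.2
    apply hvU0
    have hPv0 : Pl (vU : W) = 0 := by rw [hPvU, hz, zero_smul]
    -- h (v, v) = h (Pl w, v) = h (w, Pl v) = 0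
    have hvv : h (vU : W) (vU : W) = 0 := by
      calc h (vU : W) (vU : W) = h (C (C w)) (vU : W) := by rw [hPlapp] at hw; rw [hw]
        _ = h w (C (C (vU : W))) := hPselfadj _ _
        _ = 0 := by rw [← hPlapp, hPv0, hzero_r]
    by_contra hne
    obtain ⟨r, hrpos, hr⟩ := hrealpos _ hne
    rw [hvv] at hr
    exact (ne_of_gt hrpos) (by exact_mod_cast hr.symm)
  -- μ is real and positive
  obtain ⟨a, hapos, ha⟩ := hrealpos (vU : W) hvU0
  have hkey : (starRingEnd ℂ μ) * (a : ℂ) = h (C (vU : W)) (C (vU : W)) := by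
    calc (starRingEnd ℂ μ) * (a : ℂ) = (starRingEnd ℂ μ) * h (vU : W) (vU : W) := by rw [ha]
      _ = h (μ • (vU : W)) (vU : W) := (hsmull μ _ _).symm
      _ = h (Pl (vU : W)) (vU : W) := by rw [hPvU]
      _ = h (C (vU : W)) (C (vU : W)) := by rw [hPlapp]; rw [hPB]
  have hCvU0 : C (vU : W) ≠ 0 := by
    intro hz
    rw [hz, hzero_l] at hkey
    exact hμ0 (by
      have := mul_eq_zero.mp hkey
      rcases this with h1 | h1
      · simpa using congrArg (starRingEnd ℂ) h1
      · exact absurd (Complex.ofReal_eq_zero.mp h1) (ne_of_gt hapos))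
  obtain ⟨c, hcpos, hc⟩ := hrealpos _ hCvU0
  have hμreal : μ = ((c / a : ℝ) : ℂ) := by
    have h1 : (starRingEnd ℂ μ) = ((c / a : ℝ) : ℂ) := by
      rw [hc] at hkey
      have ha0 : (a : ℂ) ≠ 0 := Complex.ofReal_ne_zero.mpr (ne_of_gt hapos)
      rw [Complex.ofReal_div, eq_div_iff ha0]
      exact hkey
    calc μ = starRingEnd ℂ (starRingEnd ℂ μ) := by rw [Complex.conj_conj]
      _ = starRingEnd ℂ ((c / a : ℝ) : ℂ) := by rw [h1]
      _ = ((c / a : ℝ) : ℂ) := Complex.conj_ofReal _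
  set r : ℝ := c / a with hrdef
  have hrpos : 0 < r := div_pos hcpos hapos
  set t : ℝ := Real.sqrt r with htdef
  have htpos : 0 < t := Real.sqrt_pos.mpr hrpos
  have ht2 : (t : ℝ) * t = r := Real.mul_self_sqrt (le_of_lt hrpos)
  have hμconj : starRingEnd ℂ μ = μ := by rw [hμreal]; exact Complex.conj_ofReal _
  -- the eigenspace
  set E : Submodule ℂ W := LinearMap.ker (Pl - μ • LinearMap.id) with hE
  have hEmem : ∀ x, x ∈ E ↔ Pl x = μ • x := by
    intro x
    rw [hE, LinearMap.mem_ker, LinearMap.sub_apply, LinearMap.smul_apply, LinearMap.id_apply,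
      sub_eq_zero]
  have hvUE : (vU : W) ∈ E := (hEmem _).mpr hPvU
  have hPlequiv : ∀ (s : G) x, Pl (ρ s x) = ρ s (Pl x) := by
    intro s x
    rw [hPlapp, hPlapp, hCequiv, hCequiv]
  have hCE : ∀ x ∈ E, C x ∈ E := by
    intro x hx
    rw [hEmem] at hx ⊢
    calc Pl (C x) = C (C (C x)) := hPlapp _
      _ = C (Pl x) := by rw [hPlapp]
      _ = C (μ • x) := by rw [hx]
      _ = μ • C x := by rw [hCsmul, hμconj]
  set R : W → W := fun x => ((t : ℂ))⁻¹ • C x with hR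
  refine ⟨E, ?_, ?_, R, ?_, ?_, ?_, ?_, ?_⟩
  · exact Submodule.ne_bot_iff E |>.mpr ⟨(vU : W), hvUE, hvU0⟩
  · intro s x hx
    rw [hEmem] at hx ⊢
    rw [hPlequiv, hx, map_smul]
  · intro x hx
    exact Submodule.smul_mem E _ (hCE x hx)
  · intro x _ y _
    rw [hR]
    simp only [hCadd, smul_add]
  · intro a x _
    rw [hR]
    simp only [hCsmul]
    rw [smul_comm]
  · intro x hx
    show ((t : ℂ))⁻¹ • C (((t : ℂ))⁻¹ • C x) = x
    have hconjt : starRingEnd ℂ ((t : ℂ))⁻¹ = ((t : ℂ))⁻¹ := by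
      rw [map_inv₀, Complex.conj_ofReal]
    rw [hCsmul, hconjt, smul_smul, ← hPlapp, (hEmem x).mp hx, smul_smul]
    have ht0 : (t : ℂ) ≠ 0 := Complex.ofReal_ne_zero.mpr (ne_of_gt htpos)
    have hscal : (t : ℂ)⁻¹ * (t : ℂ)⁻¹ * μ = 1 := by
      rw [hμreal, ← ht2]
      push_cast
      field_simp
    rw [hscal, one_smul]
  · intro s x _
    rw [hR]
    simp only [hCequiv, map_smul]


/-- For a finite-dimensional complex representation `W` of a finite group `G`,
there is a nonzero `G`-invariant subspace `W' ⊆ W` carrying a `G`-invariant real structure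
(a conjugate-linear involution of `W'` commuting with the `G`-action) iff there is a nonzero
(possibly degenerate) `G`-invariant symmetric bilinear form on `W`. -/
theorem exists_real_type_subrep_iff_exists_invariant_symm_form
    {G : Type*} [Group G] [Finite G]
    {W : Type*} [AddCommGroup W] [Module ℂ W] [FiniteDimensional ℂ W]
    (ρ : Representation ℂ G W) :
    (∃ W' : Submodule ℂ W, W' ≠ ⊥ ∧ (∀ (s : G), ∀ x ∈ W', ρ s x ∈ W') ∧
      ∃ R : W → W,
        (∀ x ∈ W', R x ∈ W') ∧
        (∀ x ∈ W', ∀ y ∈ W', R (x + y) = R x + R y) ∧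
        (∀ (a : ℂ), ∀ x ∈ W', R (a • x) = (starRingEnd ℂ a) • R x) ∧
        (∀ x ∈ W', R (R x) = x) ∧
        (∀ (s : G), ∀ x ∈ W', R (ρ s x) = ρ s (R x))) ↔
      (∃ B : LinearMap.BilinForm ℂ W, B ≠ 0 ∧
        (∀ x y : W, B x y = B y x) ∧
        (∀ (s : G) (x y : W), B (ρ s x) (ρ s y) = B x y)) := by
  exact ⟨fun h => fwd_aux ρ h, fun h => bwd_aux ρ h⟩
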